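/- Fix n ∈ ℕ and t > 0. For ε > 0 let Q^{(ε,n)} denote the product measure on ℝ^{2^n} of 2^n independent copies of the Gaussian measure N(0, εt/2^n) on ℝ, and let Λ*(x) = (2^n/(2t))·Σ_{j=1}^{2^n} x_j² for x ∈ ℝ^{2^n}. Then for every open set G ⊆ ℝ^{2^n}, liminf_{ε→0⁺} ε·log Q^{(ε,n)}(G) ≥ −inf_{x∈G} Λ*(x). -/

import Mathlib

open MeasureTheory ProbabilityTheory Filter

lemma aux_eps_mul_log_tendsto (c : ℝ) (hc : 0 < c) :
    Tendsto (fun ε : ℝ => ε * Real.log (c * ε)) (nhdsWithin 0 (Set.Ioi 0)) (nhds 0) := by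
  have h1 : Tendsto (fun ε : ℝ => ε * Real.log ε) (nhdsWithin 0 (Set.Ioi 0)) (nhds 0) := by
    have := tendsto_log_mul_rpow_nhdsGT_zero (r := 1) one_pos
    simp only [Real.rpow_one] at this
    simpa [mul_comm] using this
  have h2 : Tendsto (fun ε : ℝ => ε * Real.log c) (nhdsWithin 0 (Set.Ioi 0)) (nhds 0) := by
    have : Tendsto (fun ε : ℝ => ε * Real.log c) (nhds 0) (nhds (0 * Real.log c)) :=
      (continuous_id.mul continuous_const).tendsto 0
    simpa using this.mono_left nhdsWithin_le_nhds
  have := h2.add h1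
  simp only [add_zero] at this
  refine this.congr' ?_
  filter_upwards [self_mem_nhdsWithin] with ε (hε : ε ∈ Set.Ioi 0)
  rw [Real.log_mul (ne_of_gt hc) (ne_of_gt hε), mul_add]

lemma aux_gauss_ball_lower (v : NNReal) (hv : v ≠ 0) (a δ : ℝ) (hδ : 0 < δ) :
    ENNReal.ofReal ((2 * δ) * ((Real.sqrt (2 * Real.pi * v))⁻¹ *
        Real.exp (-(|a| + δ) ^ 2 / (2 * (v : ℝ))))) ≤
      gaussianReal 0 v (Metric.ball a δ) := by
  rw [gaussianReal_apply 0 hv, Real.ball_eq_Ioo]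
  set C := (Real.sqrt (2 * Real.pi * v))⁻¹ * Real.exp (-(|a| + δ) ^ 2 / (2 * (v : ℝ))) with hC
  have hC0 : 0 ≤ C := mul_nonneg (inv_nonneg.2 (Real.sqrt_nonneg _)) (Real.exp_nonneg _)
  have hpt : ∀ y ∈ Set.Ioo (a - δ) (a + δ), ENNReal.ofReal C ≤ gaussianPDF 0 v y := by
    intro y hy
    rw [gaussianPDF]
    apply ENNReal.ofReal_le_ofReal
    rw [gaussianPDFReal, hC]
    apply mul_le_mul_of_nonneg_left _ (inv_nonneg.2 (Real.sqrt_nonneg _))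
    apply Real.exp_le_exp.2
    have hy2 : |y| ≤ |a| + δ := by
      have h1 : |y - a| < δ := by
        rw [abs_sub_lt_iff]; constructor <;> [linarith [hy.2]; linarith [hy.1]]
      calc |y| = |a + (y - a)| := by ring_nf
        _ ≤ |a| + |y - a| := abs_add_le _ _
        _ ≤ |a| + δ := by linarith
    have hsq : (y - 0) ^ 2 ≤ (|a| + δ) ^ 2 := by
      rw [sub_zero, ← sq_abs]
      exact pow_le_pow_left₀ (abs_nonneg y) hy2 2
    have hv0 : (0 : ℝ) < 2 * (v : ℝ) := by positivity
    have : -(|a| + δ) ^ 2 ≤ -(y - 0) ^ 2 := by linarith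
    gcongr
  calc ENNReal.ofReal ((2 * δ) * C)
      = ENNReal.ofReal C * volume (Set.Ioo (a - δ) (a + δ)) := by
        rw [Real.volume_Ioo, ← ENNReal.ofReal_mul hC0]
        congr 1; ring
    _ = ∫⁻ _ in Set.Ioo (a - δ) (a + δ), ENNReal.ofReal C := by
        rw [setLIntegral_const]
    _ ≤ ∫⁻ y in Set.Ioo (a - δ) (a + δ), gaussianPDF 0 v y :=
        setLIntegral_mono (measurable_gaussianPDF 0 v) hpt

/-- **Gärtner–Ellis lower bound** (special Gaussian case).
For the product of `2^n` i.i.d. Gaussian measures `N(0, ε t / 2^n)` on `ℝ^{2^n}` and the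
rate function `Λ*(x) = (2^n/(2t)) ∑ x_j²`, for every open set `G`,
`liminf_{ε→0⁺} ε log Q^{(ε,n)}(G) ≥ − inf_{x ∈ G} Λ*(x)`. -/
theorem gaertner_ellis_lower_bound (n : ℕ) (t : ℝ) (ht : 0 < t)
    (Q : ℝ → Measure (Fin (2 ^ n) → ℝ))
    (hQ : ∀ ε, 0 < ε → Q ε = Measure.pi fun _ : Fin (2 ^ n) =>
      gaussianReal 0 (Real.toNNReal (ε * t / 2 ^ n)))
    (Λstar : (Fin (2 ^ n) → ℝ) → ℝ)
    (hΛ : ∀ x, Λstar x = (2 ^ n / (2 * t)) * ∑ j, (x j) ^ 2)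
    (G : Set (Fin (2 ^ n) → ℝ)) (hG : IsOpen G) :
    - sInf (Λstar '' G) ≤
      liminf (fun ε => ε * Real.log ((Q ε G).toReal)) (nhdsWithin 0 (Set.Ioi 0)) := by
  rcases G.eq_empty_or_nonempty with hGe | hGne
  · subst hGe
    simp only [Set.image_empty, Real.sInf_empty, neg_zero, measure_empty,
      ENNReal.toReal_zero, Real.log_zero, mul_zero]
    rw [liminf_const]
  · set l := nhdsWithin (0:ℝ) (Set.Ioi 0) with hl
    set u : ℝ → ℝ := fun ε => ε * Real.log ((Q ε G).toReal) with hu_def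
    rw [neg_le]
    apply le_csInf (hGne.image _)
    rintro b ⟨x, hxG, rfl⟩
    rw [neg_le]
    -- goal : -Λstar x ≤ liminf u l
    set m : ℝ := (2:ℝ) ^ n with hm_def
    have hm : (0:ℝ) < m := by positivity
    obtain ⟨δ₀, hδ₀, hball⟩ := Metric.isOpen_iff.1 hG x hxG
    set g : ℝ → ℝ := fun δ => -((m / (2*t)) * ∑ j, (|x j| + δ)^2) with hg_def
    -- coboundedness of u
    have hu0 : ∀ᶠ ε in l, u ε ≤ 0 := by
      filter_upwards [self_mem_nhdsWithin] with ε (hε : ε ∈ Set.Ioi 0)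
      have h1 : (Q ε G).toReal ≤ 1 := by
        rw [hQ ε hε]
        exact ENNReal.toReal_mono (by simp) prob_le_one |>.trans (by simp)
      have h2 : Real.log ((Q ε G).toReal) ≤ 0 :=
        Real.log_nonpos ENNReal.toReal_nonneg h1
      have hε' : (0:ℝ) ≤ ε := le_of_lt hε
      show ε * Real.log ((Q ε G).toReal) ≤ 0
      nlinarith
    have hcob : IsCoboundedUnder (· ≥ ·) l u :=
      IsBoundedUnder.isCoboundedUnder_ge ⟨0, by simpa [Filter.eventually_map] using hu0⟩
    -- key bound for each small δ
    have key : ∀ δ, 0 < δ → δ < δ₀ → g δ ≤ liminf u l := by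
      intro δ hδ hδlt
      set F : ℝ → ℝ := fun ε =>
        ε * (m * Real.log (2*δ) - m * Real.log (Real.sqrt (2*Real.pi*(ε*t/m)))) + g δ
        with hF_def
      have hFu : ∀ ε, 0 < ε → F ε ≤ u ε := by
        intro ε hε
        set v : NNReal := Real.toNNReal (ε * t / 2 ^ n) with hv_def
        have hvR : (v:ℝ) = ε * t / m := Real.coe_toNNReal _ (by positivity)
        have hvpos : (0:ℝ) < v := by rw [hvR]; positivity
        have hv : v ≠ 0 := by
          intro h; rw [h] at hvpos; simp at hvpos
        set c : Fin (2^n) → ℝ := fun j => (2*δ) * ((Real.sqrt (2*Real.pi*(v:ℝ)))⁻¹ *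
          Real.exp (-(|x j| + δ)^2 / (2*(v:ℝ)))) with hc_def
        have hcpos : ∀ j, 0 < c j := by
          intro j
          have : (0:ℝ) < Real.sqrt (2*Real.pi*(v:ℝ)) := Real.sqrt_pos.2 (by positivity)
          positivity
        have hQball : ENNReal.ofReal (∏ j, c j) ≤ Q ε G := by
          have hsub : Metric.ball x δ ⊆ G :=
            (Metric.ball_subset_ball hδlt.le).trans hball
          calc ENNReal.ofReal (∏ j, c j)
              = ∏ j, ENNReal.ofReal (c j) :=
                ENNReal.ofReal_prod_of_nonneg (fun j _ => (hcpos j).le)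
            _ ≤ ∏ j, gaussianReal 0 v (Metric.ball (x j) δ) :=
                Finset.prod_le_prod' (fun j _ => aux_gauss_ball_lower v hv (x j) δ hδ)
            _ = Q ε (Metric.ball x δ) := by
                rw [hQ ε hε, ball_pi x hδ, Measure.pi_pi]
            _ ≤ Q ε G := measure_mono hsub
        have hQtop : Q ε G ≠ ⊤ := by
          rw [hQ ε hε]; exact measure_ne_top _ _
        have hP0 : (0:ℝ) < ∏ j, c j := Finset.prod_pos (fun j _ => hcpos j)
        have hPle : ∏ j, c j ≤ (Q ε G).toReal := by
          have := ENNReal.toReal_mono hQtop hQball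
          rwa [ENNReal.toReal_ofReal hP0.le] at this
        have hlogle : Real.log (∏ j, c j) ≤ Real.log ((Q ε G).toReal) :=
          Real.log_le_log hP0 hPle
        have hsum : ε * Real.log (∏ j, c j) = F ε := by
          rw [Real.log_prod (fun j _ => (hcpos j).ne')]
          have hsd : (0:ℝ) < Real.sqrt (2*Real.pi*(v:ℝ)) := Real.sqrt_pos.2 (by positivity)
          have hlog : ∀ j, Real.log (c j) =
              Real.log (2*δ) - Real.log (Real.sqrt (2*Real.pi*(v:ℝ)))
                + (-(|x j| + δ)^2 / (2*(v:ℝ))) := by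
            intro j
            rw [hc_def]
            rw [Real.log_mul (by positivity) (by positivity),
              Real.log_mul (by positivity) (Real.exp_ne_zero _),
              Real.log_inv, Real.log_exp]
            ring
          rw [Finset.sum_congr rfl (fun j _ => hlog j)]
          rw [Finset.sum_add_distrib, Finset.sum_sub_distrib, Finset.sum_const,
            Finset.sum_const, Finset.card_univ, Fintype.card_fin]
          have hsum2 : ∑ j : Fin (2^n), (-(|x j| + δ)^2 / (2*(v:ℝ)))
              = -(1/(2*(v:ℝ))) * ∑ j, (|x j| + δ)^2 := by
            rw [Finset.mul_sum]
            exact Finset.sum_congr rfl (fun j _ => by ring)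
          rw [hsum2, hF_def, hg_def, hvR]
          have hcard : ((2^n : ℕ) : ℝ) = m := by rw [hm_def]; push_cast; ring
          simp only [nsmul_eq_mul, hcard]
          have hε' : ε ≠ 0 := hε.ne'
          have ht' : t ≠ 0 := ht.ne'
          have hm' : m ≠ 0 := hm.ne'
          field_simp
        calc F ε = ε * Real.log (∏ j, c j) := hsum.symm
          _ ≤ ε * Real.log ((Q ε G).toReal) := by
              exact mul_le_mul_of_nonneg_left hlogle hε.le
          _ = u ε := rfl
      -- F tends to g δ
      have hFt : Tendsto F l (nhds (g δ)) := by
        have h1 := aux_eps_mul_log_tendsto (2*Real.pi*t/m) (by positivity)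
        have h2 : Tendsto (fun ε : ℝ => ε * (m * Real.log (2*δ))) l (nhds 0) := by
          have : Tendsto (fun ε : ℝ => ε * (m * Real.log (2*δ))) (nhds 0)
              (nhds (0 * (m * Real.log (2*δ)))) :=
            (continuous_id.mul continuous_const).tendsto 0
          simpa using this.mono_left nhdsWithin_le_nhds
        have h3 : Tendsto (fun ε : ℝ =>
            ε * (m * Real.log (2*δ)) - (m/2) * (ε * Real.log ((2*Real.pi*t/m) * ε)) + g δ)
            l (nhds (0 - (m/2) * 0 + g δ)) :=
          ((h2.sub ((h1.const_mul (m/2)).congr (fun ε => by ring))).add tendsto_const_nhds)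
        simp only [mul_zero, sub_zero, zero_sub, neg_zero, zero_add] at h3
        refine h3.congr' ?_
        filter_upwards [self_mem_nhdsWithin] with ε (hε : ε ∈ Set.Ioi 0)
        rw [hF_def]; beta_reduce
        have hεpos : (0:ℝ) < ε := hε
        have harg : (0:ℝ) ≤ 2*Real.pi*(ε*t/m) := by positivity
        have hls : Real.log (Real.sqrt (2*Real.pi*(ε*t/m)))
            = Real.log ((2*Real.pi*t/m) * ε) / 2 := by
          rw [Real.log_sqrt harg]
          congr 2
          field_simp
        rw [hls]
        ring
      have hFb : IsBoundedUnder (· ≥ ·) l F := hFt.isBoundedUnder_ge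
      have hev : ∀ᶠ ε in l, F ε ≤ u ε := by
        filter_upwards [self_mem_nhdsWithin] with ε (hε : ε ∈ Set.Ioi 0)
        exact hFu ε hε
      calc g δ = liminf F l := hFt.liminf_eq.symm
        _ ≤ liminf u l := liminf_le_liminf hev hFb hcob
    -- take δ → 0
    have hgc : Continuous g := by
      rw [hg_def]
      fun_prop
    have hg0 : g 0 = -Λstar x := by
      rw [hg_def, hΛ]
      simp [sq_abs]
    have hgt : Tendsto g l (nhds (-Λstar x)) := by
      rw [← hg0]
      exact (hgc.tendsto 0).mono_left nhdsWithin_le_nhds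
    refine le_of_tendsto hgt ?_
    filter_upwards [Ioo_mem_nhdsGT_of_mem (Set.left_mem_Ico.2 hδ₀)] with δ hδ
    exact key δ hδ.1 hδ.2
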